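/- Let p be a prime, let r ≥ 1, let G = (ℤ/pℤ)^r, and let G₁, …, G_N be the subgroups of G of index p. Let M be a finite abelian group of order prime to p on which G acts by automorphisms. Then M^G ⊆ M^{G_i} for every i, and the homomorphism Φ : M → ⊕_{i=1}^{N} M^{G_i}/M^G sending m to the tuple whose i-th coordinate is the class of the norm N_{G_i}(m) = Σ_{σ∈G_i} σ·m modulo M^G, is surjective with kernel exactly M^G; in particular Φ induces an isomorphism M/M^G ≅ ⊕_{i=1}^{N} M^{G_i}/M^G. -/

import Mathlib

/-- The norm map `m ↦ ∑_{σ ∈ H} σ·m` attached to a subgroup `H` of a finite group `G`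
acting on an additive monoid `M`. -/
noncomputable def subgroupNorm {G : Type*} [Group G] [Finite G] (H : Subgroup G)
    {M : Type*} [AddCommMonoid M] [DistribMulAction G M] (m : M) : M :=
  haveI : Fintype H := Fintype.ofFinite H
  ∑ σ : H, (σ : G) • m


open Finset

section general
variable {G : Type*} [CommGroup G] [Fintype G] {M : Type*} [AddCommGroup M]
  [DistribMulAction G M]

lemma subgroupNorm_eq_sum_filter (H : Subgroup G) (m : M) [DecidablePred (· ∈ H)] :
    subgroupNorm H m = ∑ σ ∈ Finset.univ.filter (fun σ => σ ∈ H), σ • m := by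
  rw [subgroupNorm]
  exact (Finset.sum_subtype _ (fun x => by simp) (fun σ : G => σ • m)).symm

lemma smul_subgroupNorm (H : Subgroup G) (σ : G) (m : M) :
    σ • subgroupNorm H m = subgroupNorm H (σ • m) := by
  rw [subgroupNorm, subgroupNorm, Finset.smul_sum]
  exact Finset.sum_congr rfl fun τ _ => by
    rw [smul_smul, smul_smul, mul_comm]

lemma subgroupNorm_smul_of_mem (H : Subgroup G) {σ : G} (hσ : σ ∈ H) (m : M) :
    subgroupNorm H (σ • m) = subgroupNorm H m := by
  rw [subgroupNorm, subgroupNorm]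
  exact Finset.sum_equiv (Equiv.mulRight (⟨σ, hσ⟩ : H)) (by simp) (fun τ _ => by
    simp [smul_smul])

lemma smul_subgroupNorm_of_mem (H : Subgroup G) {σ : G} (hσ : σ ∈ H) (m : M) :
    σ • subgroupNorm H m = subgroupNorm H m := by
  rw [smul_subgroupNorm, subgroupNorm_smul_of_mem H hσ]

lemma subgroupNorm_of_fixed (H : Subgroup G) {m : M} (hm : ∀ σ ∈ H, σ • m = m) :
    subgroupNorm H m = Nat.card H • m := by
  letI : Fintype H := Fintype.ofFinite H
  rw [subgroupNorm, Nat.card_eq_fintype_card]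
  have h2 : ∀ σ : H, (σ : G) • m = m := fun σ => hm σ σ.2
  rw [Finset.sum_congr rfl (fun σ _ => h2 σ), Finset.sum_const, Finset.card_univ]

lemma subgroupNorm_add (H : Subgroup G) (m m' : M) :
    subgroupNorm H (m + m') = subgroupNorm H m + subgroupNorm H m' := by
  rw [subgroupNorm, subgroupNorm, subgroupNorm, ← Finset.sum_add_distrib]
  exact Finset.sum_congr rfl fun τ _ => smul_add _ _ _

lemma subgroupNorm_nsmul (H : Subgroup G) (n : ℕ) (m : M) :
    subgroupNorm H (n • m) = n • subgroupNorm H m := by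
  rw [subgroupNorm, subgroupNorm, Finset.smul_sum]
  exact Finset.sum_congr rfl fun τ _ => smul_comm _ _ _

lemma subgroupNorm_sum {ι : Type*} (H : Subgroup G) (s : Finset ι) (f : ι → M) :
    subgroupNorm H (∑ i ∈ s, f i) = ∑ i ∈ s, subgroupNorm H (f i) := by
  classical
  induction s using Finset.induction with
  | empty => simp [subgroupNorm]
  | insert _ _ h ih => rw [Finset.sum_insert h, Finset.sum_insert h, subgroupNorm_add, ih]

-- cross-norm lemma
lemma subgroupNorm_mem_fixed_of_sup (H H' : Subgroup G) (hsup : H ⊔ H' = ⊤)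
    {x : M} (hx : ∀ σ ∈ H', σ • x = x) (σ : G) :
    σ • subgroupNorm H x = subgroupNorm H x := by
  have hmem : ∀ τ : G, τ ∈ H ⊔ H' → τ • subgroupNorm H x = subgroupNorm H x := by
    intro τ hτ
    have : τ ∈ MulAction.stabilizer G (subgroupNorm H x) := by
      refine (sup_le ?_ ?_ : H ⊔ H' ≤ _) hτ
      · intro a ha
        exact smul_subgroupNorm_of_mem H ha x
      · intro a ha
        show a • subgroupNorm H x = subgroupNorm H x
        rw [smul_subgroupNorm, subgroupNorm, subgroupNorm]
        exact Finset.sum_congr rfl fun τ' _ => by rw [hx a ha]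
    exact this
  exact hmem σ (hsup ▸ Subgroup.mem_top σ)
end general

section counting
variable (p r : ℕ) [hp : Fact p.Prime]

lemma card_Gpr : Nat.card (Multiplicative (Fin r → ZMod p)) = p ^ r := by
  simp [Nat.card_eq_fintype_card, ZMod.card]

lemma hom_eval_eq (f : (Fin r → ZMod p) →+ ZMod p) (x : Fin r → ZMod p) :
    f x = ∑ i, x i * f (Pi.single i 1) := by
  conv_lhs => rw [← Finset.univ_sum_single x, map_sum]
  refine Finset.sum_congr rfl fun i _ => ?_
  have h1 : Pi.single i (x i) = (x i).val • (Pi.single i (1 : ZMod p) : Fin r → ZMod p) := by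
    funext j
    rcases eq_or_ne j i with h | h <;>
      simp [h, Pi.single_apply, nsmul_eq_mul, ZMod.natCast_val, ZMod.cast_id]
  rw [h1, map_nsmul, nsmul_eq_mul, ZMod.natCast_val, ZMod.cast_id]

noncomputable def homEquiv : ((Fin r → ZMod p) →+ ZMod p) ≃ (Fin r → ZMod p) where
  toFun f := fun i => f (Pi.single i 1)
  invFun w :=
    { toFun := fun x => ∑ i, x i * w i
      map_zero' := by simp
      map_add' := fun a b => by
        simp [add_mul, Finset.sum_add_distrib] }
  left_inv f := AddMonoidHom.ext fun x => (hom_eval_eq p r f x).symm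
  right_inv w := by
    funext i
    simp [Pi.single_apply, ite_mul]
  
lemma card_homs : Nat.card ((Fin r → ZMod p) →+ ZMod p) = p ^ r := by
  rw [Nat.card_congr (homEquiv p r)]
  simp [Nat.card_eq_fintype_card, ZMod.card]

lemma card_fiber (hr : 1 ≤ r) (v : Fin r → ZMod p) (hv : v ≠ 0) :
    Nat.card {f : (Fin r → ZMod p) →+ ZMod p // f v = 1} = p ^ (r - 1) := by
  set Homs := (Fin r → ZMod p) →+ ZMod p
  let ev : Homs →+ ZMod p :=
    { toFun := fun f => f v
      map_zero' := rfl
      map_add' := fun f g => rfl }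
  have hsurj : Function.Surjective ev := by
    intro c
    obtain ⟨i, hi⟩ : ∃ i, v i ≠ 0 := by
      by_contra h
      push_neg at h
      exact hv (funext h)
    refine ⟨{ toFun := fun x => x i * ((v i)⁻¹ * c)
              map_zero' := by simp
              map_add' := fun a b => by simp [add_mul] }, ?_⟩
    show v i * ((v i)⁻¹ * c) = c
    rw [← mul_assoc, mul_inv_cancel₀ hi, one_mul]
  obtain ⟨f₀, hf₀⟩ := hsurj 1
  have hf₀' : f₀ v = 1 := hf₀
  have e1 : {f : Homs // f v = 1} ≃ ev.ker :=
    { toFun := fun f => ⟨f.1 - f₀, by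
        have : ev (f.1 - f₀) = ev f.1 - ev f₀ := map_sub ev _ _
        simp only [AddMonoidHom.mem_ker, this]
        show f.1 v - f₀ v = 0
        rw [f.2, hf₀', sub_self]⟩
      invFun := fun g => ⟨g.1 + f₀, by
        have hg : g.1 v = 0 := g.2
        show (g.1 + f₀) v = 1
        rw [AddMonoidHom.add_apply, hg, hf₀', zero_add]⟩
      left_inv := fun f => by simp
      right_inv := fun g => by simp }
  rw [Nat.card_congr e1]
  have hkin : ev.ker.index = p := by
    rw [AddSubgroup.index_ker, AddMonoidHom.range_eq_top.2 hsurj]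
    rw [AddSubgroup.card_top]
    simp [Nat.card_eq_fintype_card, ZMod.card]
  have h2 := AddSubgroup.index_mul_card ev.ker
  rw [hkin, card_homs p r] at h2
  obtain ⟨s, rfl⟩ : ∃ s, r = s + 1 := ⟨r - 1, (Nat.succ_pred_eq_of_pos hr).symm⟩
  have hpr : p ^ (s + 1) = p * p ^ (s + 1 - 1) := by
    simp [pow_succ, mul_comm]
  rw [hpr] at h2
  exact Nat.eq_of_mul_eq_mul_left hp.out.pos h2
end counting

section L1
variable (p r : ℕ) [hp : Fact p.Prime]

local notation "G'" => Multiplicative (Fin r → ZMod p)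

lemma phi_pow_eval (φ : G' →* Multiplicative (ZMod p)) (σ : G')
    (hφ : φ σ = Multiplicative.ofAdd 1) (c : ZMod p) :
    φ (σ ^ c.val) = Multiplicative.ofAdd c := by
  rw [map_pow, hφ]
  have : (Multiplicative.ofAdd (1 : ZMod p)) ^ c.val
      = Multiplicative.ofAdd ((c.val : ℕ) • (1 : ZMod p)) := by
    rw [ofAdd_nsmul]
  rw [this, nsmul_eq_mul, mul_one, ZMod.natCast_val, ZMod.cast_id]

lemma ker_index_eq (φ : G' →* Multiplicative (ZMod p)) (σ : G')
    (hφ : φ σ = Multiplicative.ofAdd 1) : φ.ker.index = p := by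
  have hsurj : Function.Surjective φ := by
    intro y
    exact ⟨σ ^ (Multiplicative.toAdd y).val, by
      rw [phi_pow_eval p r φ σ hφ]; simp⟩
  rw [Subgroup.index_ker, MonoidHom.range_eq_top.2 hsurj, Subgroup.card_top]
  simp [Nat.card_eq_fintype_card, ZMod.card]

lemma phimap_inj (φ φ' : G' →* Multiplicative (ZMod p)) (σ : G')
    (hφ : φ σ = Multiplicative.ofAdd 1) (hφ' : φ' σ = Multiplicative.ofAdd 1)
    (hker : φ.ker = φ'.ker) : φ = φ' := by
  refine MonoidHom.ext fun x => ?_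
  set c : ZMod p := Multiplicative.toAdd (φ x) with hc
  have h1 : φ (x * (σ ^ c.val)⁻¹) = 1 := by
    rw [map_mul, map_inv, phi_pow_eval p r φ σ hφ]
    simp [hc]
  have h2 : x * (σ ^ c.val)⁻¹ ∈ φ'.ker := hker ▸ h1
  have h3 : φ' (x * (σ ^ c.val)⁻¹) = 1 := h2
  rw [map_mul, map_inv, phi_pow_eval p r φ' σ hφ', inv_eq_iff_mul_eq_one.symm] at h3
  · rw [eq_comm, ← inv_inv (Multiplicative.ofAdd c)] at h3
    have := inv_injective h3
    rw [← this, hc]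
    simp
end L1

section L1b
variable (p r : ℕ) [hp : Fact p.Prime]

local notation "G'" => Multiplicative (Fin r → ZMod p)

lemma phimap_surj (σ : G') (H : Subgroup G') (hH : H.index = p) (hσ : σ ∉ H) :
    ∃ φ : G' →* Multiplicative (ZMod p),
      φ σ = Multiplicative.ofAdd 1 ∧ φ.ker = H := by
  haveI hnormal : H.Normal := H.normal_of_comm
  have hQ : Nat.card (G' ⧸ H) = p := by rw [← Subgroup.index_eq_card, hH]
  set σb : G' ⧸ H := QuotientGroup.mk σ with hσb
  have hσb1 : σb ≠ 1 := by
    simpa [hσb, QuotientGroup.eq_one_iff] using hσ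
  have horder : orderOf σb = p := by
    have h1 : orderOf σb ∣ p := by
      have h2 := orderOf_dvd_natCard σb
      rwa [hQ] at h2
    rcases (Nat.Prime.eq_one_or_self_of_dvd hp.out _ h1) with h | h
    · exact absurd (orderOf_eq_one_iff.mp h) hσb1
    · exact h
  have hpow : σb ^ (p : ℤ) = 1 := by
    rw [zpow_natCast]
    have h2 := pow_orderOf_eq_one σb
    rwa [horder] at h2
  -- build ψ : Multiplicative (ZMod p) →* G' ⧸ H
  set fℤ : ℤ →+ Additive (G' ⧸ H) := zmultiplesHom _ (Additive.ofMul σb) with hfZ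
  have hcond : fℤ (p : ℤ) = 0 := by
    show (p : ℤ) • Additive.ofMul σb = 0
    rw [← ofMul_zpow, hpow]
    rfl
  set fz : ZMod p →+ Additive (G' ⧸ H) := ZMod.lift p ⟨fℤ, hcond⟩ with hfz
  set ψ : Multiplicative (ZMod p) →* G' ⧸ H := AddMonoidHom.toMultiplicativeLeft fz with hψ
  have hψeval : ∀ c : ZMod p, ψ (Multiplicative.ofAdd c) = σb ^ c.val := by
    intro c
    show Additive.toMul (fz c) = σb ^ c.val
    have h1 : fz c = fℤ (c.val : ℤ) := by
      have h2 : (c : ZMod p) = ((c.val : ℤ) : ZMod p) := by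
        push_cast
        rw [ZMod.natCast_val, ZMod.cast_id]
      conv_lhs => rw [h2]
      rw [hfz]
      exact ZMod.lift_coe _ _ _
    rw [h1]
    show Additive.toMul ((c.val : ℤ) • Additive.ofMul σb) = σb ^ c.val
    rw [← ofMul_zpow, toMul_ofMul, zpow_natCast]
  haveI : Fact (1 < p) := ⟨hp.out.one_lt⟩
  have hinj : Function.Injective ψ := by
    rw [injective_iff_map_eq_one]
    intro a ha
    have h1 : ψ (Multiplicative.ofAdd (Multiplicative.toAdd a)) = 1 := by simpa using ha
    rw [hψeval] at h1
    have hdvd : p ∣ (Multiplicative.toAdd a).val := by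
      have h2 := orderOf_dvd_of_pow_eq_one h1
      rwa [horder] at h2
    have hlt : (Multiplicative.toAdd a).val < p := ZMod.val_lt _
    have h0 : (Multiplicative.toAdd a).val = 0 := Nat.eq_zero_of_dvd_of_lt hdvd hlt
    have h3 : Multiplicative.toAdd a = 0 := (ZMod.val_eq_zero _).mp h0
    simpa using congrArg Multiplicative.ofAdd h3
  have hbij : Function.Bijective ψ := by
    rw [Nat.bijective_iff_injective_and_card]
    refine ⟨hinj, ?_⟩
    rw [hQ]
    simp [Nat.card_eq_fintype_card, ZMod.card]
  set e : Multiplicative (ZMod p) ≃* G' ⧸ H := MulEquiv.ofBijective ψ hbij with he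
  have he1 : e (Multiplicative.ofAdd 1) = σb := by
    show ψ (Multiplicative.ofAdd 1) = σb
    rw [hψeval, ZMod.val_one, pow_one]
  refine ⟨(e.symm.toMonoidHom).comp (QuotientGroup.mk' H), ?_, ?_⟩
  · show e.symm (QuotientGroup.mk σ) = Multiplicative.ofAdd 1
    rw [MulEquiv.symm_apply_eq, he1]
  · ext x
    show e.symm (QuotientGroup.mk x) = 1 ↔ x ∈ H
    rw [EmbeddingLike.map_eq_one_iff]
    exact QuotientGroup.eq_one_iff x

lemma card_subgroups_not_mem (hr : 1 ≤ r) (σ : G') (hσ1 : σ ≠ 1) :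
    Nat.card {H : Subgroup G' // H.index = p ∧ σ ∉ H} = p ^ (r - 1) := by
  haveI : Fact (1 < p) := ⟨hp.out.one_lt⟩
  set A := {φ : G' →* Multiplicative (ZMod p) // φ σ = Multiplicative.ofAdd 1}
  set B := {H : Subgroup G' // H.index = p ∧ σ ∉ H}
  have hFbij : ∃ F : A → B, Function.Bijective F := by
    refine ⟨fun φ => ⟨φ.1.ker, ker_index_eq p r φ.1 σ φ.2, ?_⟩, ?_, ?_⟩
    · intro hmem
      have h1 : φ.1 σ = 1 := hmem
      rw [φ.2] at h1
      have : (1 : ZMod p) = 0 := by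
        simpa using congrArg Multiplicative.toAdd h1
      exact one_ne_zero this
    · rintro ⟨φ, hφ⟩ ⟨φ', hφ'⟩ hFF
      have hk : φ.ker = φ'.ker := congrArg (fun b : B => b.1) hFF
      exact Subtype.ext (phimap_inj p r φ φ' σ hφ hφ' hk)
    · rintro ⟨H, hH, hσH⟩
      obtain ⟨φ, h1, h2⟩ := phimap_surj p r σ H hH hσH
      exact ⟨⟨φ, h1⟩, Subtype.ext h2⟩
  obtain ⟨F, hF⟩ := hFbij
  have hcard : Nat.card B = Nat.card A := (Nat.card_eq_of_bijective F hF).symm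
  rw [hcard]
  have hv : Multiplicative.toAdd σ ≠ 0 := by
    intro h
    exact hσ1 (by simpa using congrArg Multiplicative.ofAdd h)
  have hA : Nat.card A =
      Nat.card {f : (Fin r → ZMod p) →+ ZMod p // f (Multiplicative.toAdd σ) = 1} := by
    refine (Nat.card_congr ?_).symm
    refine (AddMonoidHom.toMultiplicative).subtypeEquiv fun f => ?_
    constructor
    · intro h
      show AddMonoidHom.toMultiplicative f σ = Multiplicative.ofAdd 1
      have : AddMonoidHom.toMultiplicative f σ
          = Multiplicative.ofAdd (f (Multiplicative.toAdd σ)) := rfl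
      rw [this, h]
    · intro h
      have : Multiplicative.ofAdd (f (Multiplicative.toAdd σ)) = Multiplicative.ofAdd 1 := h
      simpa using congrArg Multiplicative.toAdd this
  rw [hA]
  exact card_fiber p r hr _ hv
end L1b

section KI
variable (p r : ℕ) [hp : Fact p.Prime]

local notation "G'" => Multiplicative (Fin r → ZMod p)

lemma card_of_index (hr : 1 ≤ r) (H : Subgroup G') (hH : H.index = p) :
    Nat.card H = p ^ (r - 1) := by
  have h2 := Subgroup.index_mul_card H
  rw [hH, card_Gpr p r] at h2
  obtain ⟨s, rfl⟩ : ∃ s, r = s + 1 := ⟨r - 1, (Nat.succ_pred_eq_of_pos hr).symm⟩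
  have hpr : p ^ (s + 1) = p * p ^ (s + 1 - 1) := by simp [pow_succ, mul_comm]
  rw [hpr] at h2
  exact Nat.eq_of_mul_eq_mul_left hp.out.pos h2

lemma sup_eq_top_of_ne (H H' : Subgroup G') (hH : H.index = p) (hH' : H'.index = p)
    (hne : H ≠ H') : H ⊔ H' = ⊤ := by
  have key : ∀ K : Subgroup G', K.index = p → K ≤ H ⊔ H' → (H ⊔ H').index = p → K = H ⊔ H' := by
    intro K hK hle hi
    have h1 := Subgroup.relIndex_mul_index hle
    rw [hK, hi] at h1
    have h2 : K.relIndex (H ⊔ H') = 1 := by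
      have := Nat.eq_of_mul_eq_mul_right hp.out.pos (h1.trans (one_mul p).symm)
      exact this
    exact le_antisymm hle (Subgroup.relIndex_eq_one.mp h2)
  have hdvd : (H ⊔ H').index ∣ p := by
    have h0 : (H ⊔ H').index ∣ H.index := Subgroup.index_dvd_of_le le_sup_left
    rwa [hH] at h0
  rcases (Nat.Prime.eq_one_or_self_of_dvd hp.out _ hdvd) with h | h
  · exact Subgroup.index_eq_one.mp h
  · exfalso
    have e1 : H = H ⊔ H' := key H hH le_sup_left h
    have e2 : H' = H ⊔ H' := key H' hH' le_sup_right h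
    exact hne (e1.trans e2.symm)

variable [Fintype (Subgroup (Multiplicative (Fin r → ZMod p)))]
  [DecidablePred (fun H : Subgroup (Multiplicative (Fin r → ZMod p)) => H.index = p)]

lemma key_identity {M : Type*} [AddCommGroup M] [DistribMulAction G' M]
    (hr : 1 ≤ r) (m : M) :
    ∑ H ∈ Finset.univ.filter (fun H : Subgroup G' => H.index = p), subgroupNorm H m
      = p ^ (r - 1) • m
        + ((Finset.univ.filter (fun H : Subgroup G' => H.index = p)).card - p ^ (r - 1))
            • subgroupNorm (⊤ : Subgroup G') m := by
  classical
  set C := Finset.univ.filter (fun H : Subgroup G' => H.index = p) with hC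
  set k := C.card - p ^ (r - 1) with hk
  -- counts
  have hcnt : ∀ σ : G', σ ≠ 1 → (C.filter (fun H => σ ∈ H)).card = k := by
    intro σ hσ
    have hpart := Finset.card_filter_add_card_filter_not
      (s := C) (p := fun H => σ ∈ H)
    have hnotmem : (C.filter (fun H => ¬ σ ∈ H)).card = p ^ (r - 1) := by
      have h1 : (C.filter (fun H => ¬ σ ∈ H)).card
          = Nat.card {H : Subgroup G' // H.index = p ∧ σ ∉ H} := by
        rw [Nat.card_eq_fintype_card, Fintype.card_subtype, hC, Finset.filter_filter]
      rw [h1, card_subgroups_not_mem p r hr σ hσ]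
    omega
  have hcnt1 : (C.filter (fun H => (1:G') ∈ H)).card = C.card := by
    rw [Finset.filter_true_of_mem]
    intro H _
    exact H.one_mem
  -- existence of σ ≠ 1 gives k + p^(r-1) = C.card
  have hnontriv : Nontrivial G' := by
    have h1 : 1 < Nat.card G' := by
      rw [card_Gpr p r]
      exact Nat.one_lt_pow (by omega) hp.out.one_lt
    exact (Finite.one_lt_card_iff_nontrivial).mp h1
  obtain ⟨σ₀, hσ₀⟩ := exists_ne (1 : G')
  have hkC : k + p ^ (r - 1) = C.card := by
    have h1 := Finset.card_filter_add_card_filter_not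
      (s := C) (p := fun H => σ₀ ∈ H)
    have h2 : (C.filter (fun H => ¬ σ₀ ∈ H)).card = p ^ (r - 1) := by
      have h3 : (C.filter (fun H => ¬ σ₀ ∈ H)).card
          = Nat.card {H : Subgroup G' // H.index = p ∧ σ₀ ∉ H} := by
        rw [Nat.card_eq_fintype_card, Fintype.card_subtype, hC, Finset.filter_filter]
      rw [h3, card_subgroups_not_mem p r hr σ₀ hσ₀]
    have h4 := hcnt σ₀ hσ₀
    omega
  -- double counting
  have step1 : ∑ H ∈ C, subgroupNorm H m
      = ∑ σ : G', (C.filter (fun H => σ ∈ H)).card • (σ • m) := by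
    rw [Finset.sum_congr rfl (fun H _ => subgroupNorm_eq_sum_filter H m)]
    rw [Finset.sum_congr rfl (fun H _ => Finset.sum_filter (fun σ => σ ∈ H) (fun σ => σ • m))]
    rw [Finset.sum_comm]
    refine Finset.sum_congr rfl fun σ _ => ?_
    rw [← Finset.sum_filter, Finset.sum_const]
  have htop : subgroupNorm (⊤ : Subgroup G') m = ∑ σ : G', σ • m := by
    rw [subgroupNorm_eq_sum_filter, Finset.filter_true_of_mem (fun σ _ => Subgroup.mem_top σ)]
  rw [step1]
  rw [← Finset.add_sum_erase _ _ (Finset.mem_univ (1 : G'))]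
  have step2 : ∑ σ ∈ Finset.univ.erase (1 : G'),
      (C.filter (fun H => σ ∈ H)).card • (σ • m)
      = k • (subgroupNorm (⊤ : Subgroup G') m - m) := by
    rw [Finset.sum_congr rfl (fun σ hσ => by
      rw [hcnt σ (Finset.ne_of_mem_erase hσ)])]
    rw [← Finset.smul_sum, htop]
    congr 1
    rw [Finset.sum_erase_eq_sub (Finset.mem_univ (1 : G'))]
    rw [one_smul]
  rw [step2, hcnt1, one_smul, ← hkC, add_nsmul, smul_sub]
  abel
end KI


set_option maxHeartbeats 1000000 in
/-- For `G = (ℤ/pℤ)^r` acting on a finite abelian group `M` of order prime to `p`, with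
`G₁, …, G_N` the index-`p` subgroups: `M^G ⊆ M^{G_i}` for each `i`, and the map
`Φ : M → ⊕ᵢ M^{G_i}/M^G`, whose `i`-th coordinate is the norm `N_{G_i}(m)` modulo `M^G`,
is surjective with kernel exactly `M^G`, hence induces `M/M^G ≅ ⊕ᵢ M^{G_i}/M^G`. -/
theorem stmt10 (p r : ℕ) [Fact p.Prime] (hr : 1 ≤ r)
    (M : Type*) [AddCommGroup M] [Finite M]
    [DistribMulAction (Multiplicative (Fin r → ZMod p)) M]
    (hM : Nat.Coprime p (Nat.card M)) :
    (∀ H : Subgroup (Multiplicative (Fin r → ZMod p)), H.index = p →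
      {m : M | ∀ σ : Multiplicative (Fin r → ZMod p), σ • m = m} ⊆
        {m : M | ∀ σ ∈ H, σ • m = m}) ∧
    (∀ m : M,
      (∀ H : Subgroup (Multiplicative (Fin r → ZMod p)), H.index = p →
          subgroupNorm H m ∈
            {m' : M | ∀ σ : Multiplicative (Fin r → ZMod p), σ • m' = m'}) ↔
        ∀ σ : Multiplicative (Fin r → ZMod p), σ • m = m) ∧
    (∀ w : Subgroup (Multiplicative (Fin r → ZMod p)) → M,
      (∀ H, H.index = p → w H ∈ {m : M | ∀ σ ∈ H, σ • m = m}) →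
      ∃ m : M, ∀ H, H.index = p →
        subgroupNorm H m - w H ∈
          {m' : M | ∀ σ : Multiplicative (Fin r → ZMod p), σ • m' = m'}) := by
  classical
  have hp : Fact p.Prime := inferInstance
  -- killing by powers of p is injective
  have F1 : ∀ (k : ℕ) (x : M), p ^ k • x = 0 → x = 0 := by
    intro k x hx
    have h1 : addOrderOf x ∣ p ^ k := addOrderOf_dvd_iff_nsmul_eq_zero.mpr hx
    have h2 : addOrderOf x ∣ Nat.card M := addOrderOf_dvd_natCard x
    have h3 : Nat.Coprime (p ^ k) (Nat.card M) := hM.pow_left k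
    have h4 : addOrderOf x = 1 := (Nat.Coprime.coprime_dvd_left h1 h3).eq_one_of_dvd h2
    exact AddMonoid.addOrderOf_eq_one_iff.mp h4
  -- p^(r-1) is invertible on M
  have F2 : ∃ c : ℕ, ∀ x : M, (c * p ^ (r - 1)) • x = x := by
    have hcop : Nat.Coprime (p ^ (r - 1)) (Nat.card M) := hM.pow_left _
    have hn : 0 < Nat.card M := Nat.card_pos
    by_cases h1 : Nat.card M = 1
    · haveI : Subsingleton M :=
        (Nat.card_eq_one_iff_unique.mp h1).1
      exact ⟨1, fun x => Subsingleton.elim _ _⟩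
    · have h2 : 1 < Nat.card M := by omega
      obtain ⟨c, -, hc⟩ := Nat.exists_mul_mod_eq_one_of_coprime hcop h2
      refine ⟨c, fun x => ?_⟩
      have hx : (Nat.card M) • x = 0 := card_nsmul_eq_zero'
      have key : c * p ^ (r - 1)
          = (p ^ (r - 1) * c) % Nat.card M
            + Nat.card M * ((p ^ (r - 1) * c) / Nat.card M) := by
        rw [Nat.mod_add_div, mul_comm]
      rw [key, hc, add_nsmul, one_nsmul, mul_nsmul, hx, smul_zero, add_zero]
  -- the fixed-point subgroup
  let MG : AddSubgroup M :=
    { carrier := {m' : M | ∀ σ : Multiplicative (Fin r → ZMod p), σ • m' = m'}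
      zero_mem' := fun σ => smul_zero σ
      add_mem' := fun {a b} ha hb σ => by rw [smul_add, ha σ, hb σ]
      neg_mem' := fun {a} ha σ => by rw [smul_neg, ha σ] }
  letI instF : Fintype (Subgroup (Multiplicative (Fin r → ZMod p))) := Fintype.ofFinite _
  set C := Finset.univ.filter
    (fun H : Subgroup (Multiplicative (Fin r → ZMod p)) => H.index = p) with hCdef
  have hmemC : ∀ H : Subgroup (Multiplicative (Fin r → ZMod p)), H ∈ C ↔ H.index = p := by
    intro H
    simp [hCdef]
  have hNtop : ∀ m : M, subgroupNorm (⊤ : Subgroup (Multiplicative (Fin r → ZMod p))) m ∈ MG :=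
    fun m σ => smul_subgroupNorm_of_mem ⊤ (Subgroup.mem_top σ) m
  refine ⟨?_, ?_, ?_⟩
  · exact fun H hH m hm σ _ => hm σ
  · intro m
    constructor
    · intro hnorm
      have hKI := key_identity p r (M := M) hr m
      have hsum : (∑ H ∈ C, subgroupNorm H m) ∈ MG :=
        AddSubgroup.sum_mem MG (fun H hH => hnorm H ((hmemC H).mp hH))
      have hksmul : (C.card - p ^ (r - 1)) •
          subgroupNorm (⊤ : Subgroup (Multiplicative (Fin r → ZMod p))) m ∈ MG :=
        AddSubgroup.nsmul_mem MG (hNtop m) _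
      have hfix : p ^ (r - 1) • m ∈ MG := by
        have h5 : p ^ (r - 1) • m
            = (∑ H ∈ C, subgroupNorm H m)
              - (C.card - p ^ (r - 1)) •
                  subgroupNorm (⊤ : Subgroup (Multiplicative (Fin r → ZMod p))) m := by
          rw [hKI]
          abel
        rw [h5]
        exact AddSubgroup.sub_mem MG hsum hksmul
      intro σ
      have h7 : σ • (p ^ (r - 1) • m) = p ^ (r - 1) • m := hfix σ
      have h8 : σ • (p ^ (r - 1) • m) = p ^ (r - 1) • (σ • m) :=
        (DistribMulAction.toAddMonoidHom M σ).map_nsmul _ m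
      rw [h8] at h7
      have h6 : p ^ (r - 1) • (σ • m - m) = 0 := by
        rw [nsmul_sub, h7, sub_self]
      exact sub_eq_zero.mp (F1 (r - 1) _ h6)
    · intro hm H hH σ
      rw [smul_subgroupNorm, hm σ]
  · intro w hw
    obtain ⟨c, hc⟩ := F2
    refine ⟨c • ∑ H ∈ C, w H, ?_⟩
    intro H hH
    have hHC : H ∈ C := (hmemC H).mpr hH
    have expand : subgroupNorm H (c • ∑ H' ∈ C, w H')
        = c • ∑ H' ∈ C, subgroupNorm H (w H') := by
      rw [subgroupNorm_nsmul, subgroupNorm_sum]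
    rw [expand, ← Finset.add_sum_erase C _ hHC]
    have hself : subgroupNorm H (w H) = p ^ (r - 1) • w H := by
      rw [subgroupNorm_of_fixed H (hw H hH), card_of_index p r hr H hH]
    rw [hself, smul_add]
    have hfirst : c • p ^ (r - 1) • w H = w H := by
      rw [← mul_nsmul, mul_comm (p ^ (r - 1)) c, hc]
    rw [hfirst]
    have hre : (w H + c • ∑ H' ∈ C.erase H, subgroupNorm H (w H')) - w H
        = c • ∑ H' ∈ C.erase H, subgroupNorm H (w H') := by
      abel
    rw [hre]
    refine AddSubgroup.nsmul_mem MG (AddSubgroup.sum_mem MG (fun H' hH' => ?_)) c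
    have hne : H' ≠ H := Finset.ne_of_mem_erase hH'
    have hH'C : H'.index = p := (hmemC H').mp (Finset.mem_of_mem_erase hH')
    have hsup : H ⊔ H' = ⊤ := sup_eq_top_of_ne p r H H' hH hH'C (Ne.symm hne)
    exact fun σ => subgroupNorm_mem_fixed_of_sup H H' hsup (hw H' hH'C) σ
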